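/- For any two matrices A, B ∈ ℝ^{n×n}, ‖B − A‖_F² ≥ Σⱼ (σⱼ(B) − σⱼ(A))², where σ₁(·) ≥ … ≥ σₙ(·) denote the non-increasingly ordered singular values. Moreover, equality holds if trace(B Aᵀ) = Σⱼ σⱼ(B) σⱼ(A). -/
import Mathlib


open Matrix Finset

/-- `σ` is the non-increasingly ordered tuple of singular values of `M`. -/
def IsOrderedSingularValues {n : ℕ} (M : Matrix (Fin n) (Fin n) ℝ) (σ : Fin n → ℝ) : Prop :=
  Antitone σ ∧ (∀ i, 0 ≤ σ i) ∧
  ∃ (U V : Matrix (Fin n) (Fin n) ℝ), Uᵀ * U = 1 ∧ Vᵀ * V = 1 ∧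
    M = U * Matrix.diagonal σ * Vᵀ

private def hwExt {n : ℕ} (x : Fin n → ℝ) (k : ℕ) : ℝ := if h : k < n then x ⟨k, h⟩ else 0

private def hwD {n : ℕ} (x : Fin n → ℝ) (k : ℕ) : ℝ := hwExt x k - hwExt x (k + 1)

private lemma hwD_nonneg {n : ℕ} {x : Fin n → ℝ} (hx : Antitone x) (hx0 : ∀ i, 0 ≤ x i)
    (k : ℕ) : 0 ≤ hwD x k := by
  unfold hwD hwExt
  split_ifs with h1 h2
  · exact sub_nonneg.2 (hx (by simp [Fin.le_def]))
  · simpa using hx0 _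
  · omega
  · simp

private lemma hw_telescope (f : ℕ → ℝ) (a b : ℕ) (h : a ≤ b) :
    ∑ k ∈ Finset.Ico a b, (f k - f (k + 1)) = f a - f b := by
  rw [Finset.sum_Ico_eq_sum_range]
  have : ∀ k, f (a + k) - f (a + k + 1) = (fun i => f (a + i)) k - (fun i => f (a + i)) (k + 1) := by
    intro k; simp [Nat.add_assoc]
  simp_rw [this]
  rw [Finset.sum_range_sub' (fun i => f (a + i))]
  simp [Nat.add_sub_cancel' h]

private lemma hw_abel {n : ℕ} (x : Fin n → ℝ) (i : Fin n) :
    x i = ∑ k : Fin n, (if (i : ℕ) ≤ (k : ℕ) then hwD x k else 0) := by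
  have h1 : ∑ k : Fin n, (if (i : ℕ) ≤ (k : ℕ) then hwD x k else 0)
      = ∑ k ∈ Finset.range n, (if (i : ℕ) ≤ k then hwD x k else 0) :=
    Fin.sum_univ_eq_sum_range (fun k => if (i : ℕ) ≤ k then hwD x k else 0) n
  have h2 : (Finset.range n).filter (fun k => (i : ℕ) ≤ k) = Finset.Ico (i : ℕ) n := by
    ext k; simp [Finset.mem_Ico, and_comm]
  rw [h1, ← Finset.sum_filter, h2]
  unfold hwD
  rw [hw_telescope (hwExt x) _ _ (le_of_lt i.isLt)]
  unfold hwExt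
  rw [dif_pos i.isLt, dif_neg (lt_irrefl n)]
  simp

private lemma hw_swap4 {n : ℕ} (g : Fin n → Fin n → Fin n → Fin n → ℝ) :
    ∑ i, ∑ j, ∑ k, ∑ l, g i j k l = ∑ k, ∑ l, ∑ i, ∑ j, g i j k l := by
  calc ∑ i, ∑ j, ∑ k, ∑ l, g i j k l
      = ∑ i, ∑ k, ∑ j, ∑ l, g i j k l :=
        Finset.sum_congr rfl fun i _ => Finset.sum_comm
    _ = ∑ k, ∑ i, ∑ j, ∑ l, g i j k l := Finset.sum_comm
    _ = ∑ k, ∑ i, ∑ l, ∑ j, g i j k l :=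
        Finset.sum_congr rfl fun k _ => Finset.sum_congr rfl fun i _ => Finset.sum_comm
    _ = ∑ k, ∑ l, ∑ i, ∑ j, g i j k l :=
        Finset.sum_congr rfl fun k _ => Finset.sum_comm

private lemma hw_swap3 {n : ℕ} (g : Fin n → Fin n → Fin n → ℝ) :
    ∑ i, ∑ k, ∑ l, g i k l = ∑ k, ∑ l, ∑ i, g i k l := by
  calc ∑ i, ∑ k, ∑ l, g i k l
      = ∑ k, ∑ i, ∑ l, g i k l := Finset.sum_comm
    _ = ∑ k, ∑ l, ∑ i, g i k l :=
        Finset.sum_congr rfl fun k _ => Finset.sum_comm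

/-- Key doubly-stochastic rearrangement bound. -/
private lemma hw_ds_bound {n : ℕ} (M : Matrix (Fin n) (Fin n) ℝ) (x y : Fin n → ℝ)
    (hx : Antitone x) (hy : Antitone y) (hx0 : ∀ i, 0 ≤ x i) (hy0 : ∀ i, 0 ≤ y i)
    (hM0 : ∀ i j, 0 ≤ M i j) (hrow : ∀ i, ∑ j, M i j = 1) (hcol : ∀ j, ∑ i, M i j = 1) :
    ∑ i, ∑ j, x i * M i j * y j ≤ ∑ i, x i * y i := by
  have key : ∀ k l : Fin n,
      (∑ i : Fin n, ∑ j : Fin n, (if (i : ℕ) ≤ (k : ℕ) then (if (j : ℕ) ≤ (l : ℕ) then M i j else 0) else 0))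
      ≤ ∑ i : Fin n, (if (i : ℕ) ≤ (k : ℕ) then (if (i : ℕ) ≤ (l : ℕ) then (1 : ℝ) else 0) else 0) := by
    intro k l
    rcases le_total (k : ℕ) (l : ℕ) with h | h
    · calc ∑ i : Fin n, ∑ j : Fin n, (if (i : ℕ) ≤ (k : ℕ) then (if (j : ℕ) ≤ (l : ℕ) then M i j else 0) else 0)
          ≤ ∑ i : Fin n, (if (i : ℕ) ≤ (k : ℕ) then (1 : ℝ) else 0) := by
            refine Finset.sum_le_sum fun i _ => ?_
            split_ifs with hik
            · calc ∑ j : Fin n, (if (j : ℕ) ≤ (l : ℕ) then M i j else 0)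
                  ≤ ∑ j, M i j := by
                    refine Finset.sum_le_sum fun j _ => ?_
                    split_ifs
                    · exact le_rfl
                    · exact hM0 i j
                _ = 1 := hrow i
            · simp
        _ = _ := by
            refine Finset.sum_congr rfl fun i _ => ?_
            split_ifs <;> first | rfl | omega
    · calc ∑ i : Fin n, ∑ j : Fin n, (if (i : ℕ) ≤ (k : ℕ) then (if (j : ℕ) ≤ (l : ℕ) then M i j else 0) else 0)
          = ∑ j : Fin n, ∑ i : Fin n, (if (i : ℕ) ≤ (k : ℕ) then (if (j : ℕ) ≤ (l : ℕ) then M i j else 0) else 0) :=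
            Finset.sum_comm
        _ ≤ ∑ j : Fin n, (if (j : ℕ) ≤ (l : ℕ) then (1 : ℝ) else 0) := by
            refine Finset.sum_le_sum fun j _ => ?_
            rcases le_or_gt (j : ℕ) (l : ℕ) with hjl | hjl
            · rw [if_pos hjl]
              calc ∑ i : Fin n, (if (i : ℕ) ≤ (k : ℕ) then (if (j : ℕ) ≤ (l : ℕ) then M i j else 0) else 0)
                  ≤ ∑ i, M i j := by
                    refine Finset.sum_le_sum fun i _ => ?_
                    split_ifs <;> first | exact le_rfl | exact hM0 i j
                _ = 1 := hcol j
            · rw [if_neg (not_le.2 hjl)]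
              refine le_of_eq (Finset.sum_eq_zero fun i _ => ?_)
              rw [if_neg (not_le.2 hjl)]
              split_ifs <;> rfl
        _ = _ := by
            refine Finset.sum_congr rfl fun i _ => ?_
            split_ifs <;> first | rfl | omega
  have lhs_eq : ∑ i, ∑ j, x i * M i j * y j
      = ∑ k : Fin n, ∑ l : Fin n, hwD x (k : ℕ) * hwD y (l : ℕ) *
          (∑ i : Fin n, ∑ j : Fin n, (if (i : ℕ) ≤ (k : ℕ) then (if (j : ℕ) ≤ (l : ℕ) then M i j else 0) else 0)) := by
    have step1 : ∑ i, ∑ j, x i * M i j * y j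
        = ∑ i : Fin n, ∑ j : Fin n, ∑ k : Fin n, ∑ l : Fin n, (if (i : ℕ) ≤ (k : ℕ) then hwD x k else 0) * M i j *
            (if (j : ℕ) ≤ (l : ℕ) then hwD y l else 0) := by
      refine Finset.sum_congr rfl fun i _ => Finset.sum_congr rfl fun j _ => ?_
      rw [hw_abel x i, hw_abel y j]
      simp only [Finset.sum_mul, Finset.mul_sum]
      rw [Finset.sum_comm]
    rw [step1, hw_swap4]
    refine Finset.sum_congr rfl fun k _ => Finset.sum_congr rfl fun l _ => ?_
    simp only [Finset.mul_sum]
    refine Finset.sum_congr rfl fun i _ => Finset.sum_congr rfl fun j _ => ?_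
    split_ifs <;> ring
  have rhs_eq : ∑ i, x i * y i
      = ∑ k : Fin n, ∑ l : Fin n, hwD x (k : ℕ) * hwD y (l : ℕ) *
          (∑ i : Fin n, (if (i : ℕ) ≤ (k : ℕ) then (if (i : ℕ) ≤ (l : ℕ) then (1 : ℝ) else 0) else 0)) := by
    have step1 : ∑ i, x i * y i
        = ∑ i : Fin n, ∑ k : Fin n, ∑ l : Fin n, (if (i : ℕ) ≤ (k : ℕ) then hwD x k else 0) *
            (if (i : ℕ) ≤ (l : ℕ) then hwD y l else 0) := by
      refine Finset.sum_congr rfl fun i _ => ?_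
      rw [hw_abel x i, hw_abel y i]
      simp only [Finset.sum_mul, Finset.mul_sum]
      rw [Finset.sum_comm]
    rw [step1, hw_swap3]
    refine Finset.sum_congr rfl fun k _ => Finset.sum_congr rfl fun l _ => ?_
    simp only [Finset.mul_sum]
    refine Finset.sum_congr rfl fun i _ => ?_
    split_ifs <;> ring
  rw [lhs_eq, rhs_eq]
  refine Finset.sum_le_sum fun k _ => Finset.sum_le_sum fun l _ => ?_
  exact mul_le_mul_of_nonneg_left (key k l)
    (mul_nonneg (hwD_nonneg hx hx0 k) (hwD_nonneg hy hy0 l))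

/-- Frobenius norm squared equals sum of squared singular values. -/
private lemma hw_frob {n : ℕ} (U V : Matrix (Fin n) (Fin n) ℝ) (σ : Fin n → ℝ)
    (hU : Uᵀ * U = 1) (hV : Vᵀ * V = 1) :
    ∑ i, ∑ j, (U * Matrix.diagonal σ * Vᵀ) i j ^ 2 = ∑ i, σ i ^ 2 := by
  set M := U * Matrix.diagonal σ * Vᵀ with hM
  have h1 : ∑ i, ∑ j, M i j ^ 2 = (Mᵀ * M).trace := by
    simp only [Matrix.trace, Matrix.diag, Matrix.mul_apply, Matrix.transpose_apply, sq]
    rw [Finset.sum_comm]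
  have h2 : Mᵀ * M = V * (Matrix.diagonal σ * Matrix.diagonal σ) * Vᵀ := by
    rw [hM]
    rw [Matrix.transpose_mul, Matrix.transpose_mul, Matrix.transpose_transpose,
      Matrix.diagonal_transpose]
    calc V * (Matrix.diagonal σ * Uᵀ) * (U * Matrix.diagonal σ * Vᵀ)
        = V * Matrix.diagonal σ * (Uᵀ * U) * Matrix.diagonal σ * Vᵀ := by
          simp only [Matrix.mul_assoc]
      _ = V * (Matrix.diagonal σ * Matrix.diagonal σ) * Vᵀ := by
          rw [hU, Matrix.mul_one]; simp only [Matrix.mul_assoc]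
  rw [h1, h2, Matrix.trace_mul_cycle, hV, Matrix.one_mul, Matrix.diagonal_mul_diagonal,
    Matrix.trace_diagonal]
  simp [sq]

theorem hoffman_wielandt_type_inequality {n : ℕ}
    (A B : Matrix (Fin n) (Fin n) ℝ) (σA σB : Fin n → ℝ)
    (hA : IsOrderedSingularValues A σA) (hB : IsOrderedSingularValues B σB) :
    (∑ i, ∑ j, (B i j - A i j) ^ 2 ≥ ∑ j, (σB j - σA j) ^ 2) ∧
    ((B * Aᵀ).trace = ∑ j, σB j * σA j →
      ∑ i, ∑ j, (B i j - A i j) ^ 2 = ∑ j, (σB j - σA j) ^ 2) := by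
  obtain ⟨hAanti, hA0, UA, VA, hUA, hVA, hAeq⟩ := hA
  obtain ⟨hBanti, hB0, UB, VB, hUB, hVB, hBeq⟩ := hB
  have hnA : ∑ i, ∑ j, A i j ^ 2 = ∑ i, σA i ^ 2 := by
    rw [hAeq]; exact hw_frob UA VA σA hUA hVA
  have hnB : ∑ i, ∑ j, B i j ^ 2 = ∑ i, σB i ^ 2 := by
    rw [hBeq]; exact hw_frob UB VB σB hUB hVB
  have hcross : ∑ i, ∑ j, B i j * A i j = (B * Aᵀ).trace := by
    simp only [Matrix.trace, Matrix.diag, Matrix.mul_apply, Matrix.transpose_apply]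
  set P := VBᵀ * VA with hP
  set Q := UAᵀ * UB with hQ
  have hUA' : UA * UAᵀ = 1 := mul_eq_one_comm.1 hUA
  have hVA' : VA * VAᵀ = 1 := mul_eq_one_comm.1 hVA
  have hUB' : UB * UBᵀ = 1 := mul_eq_one_comm.1 hUB
  have hVB' : VB * VBᵀ = 1 := mul_eq_one_comm.1 hVB
  have hPPt : P * Pᵀ = 1 := by
    rw [hP, Matrix.transpose_mul, Matrix.transpose_transpose]
    calc VBᵀ * VA * (VAᵀ * VB) = VBᵀ * (VA * VAᵀ) * VB := by simp only [Matrix.mul_assoc]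
      _ = 1 := by rw [hVA', Matrix.mul_one, hVB]
  have hPtP : Pᵀ * P = 1 := mul_eq_one_comm.1 hPPt
  have hQQt : Q * Qᵀ = 1 := by
    rw [hQ, Matrix.transpose_mul, Matrix.transpose_transpose]
    calc UAᵀ * UB * (UBᵀ * UA) = UAᵀ * (UB * UBᵀ) * UA := by simp only [Matrix.mul_assoc]
      _ = 1 := by rw [hUB', Matrix.mul_one, hUA]
  have hQtQ : Qᵀ * Q = 1 := mul_eq_one_comm.1 hQQt
  have htr_eq : (B * Aᵀ).trace = ∑ i, ∑ j, σB i * (P i j * Q j i) * σA j := by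
    have hAt : Aᵀ = VA * (Matrix.diagonal σA * UAᵀ) := by
      rw [hAeq, Matrix.transpose_mul, Matrix.transpose_mul, Matrix.transpose_transpose,
        Matrix.diagonal_transpose]
    have hBA : B * Aᵀ = UB * (Matrix.diagonal σB * (P * (Matrix.diagonal σA * UAᵀ))) := by
      rw [hBeq, hAt, hP]
      simp only [Matrix.mul_assoc]
    rw [hBA, Matrix.trace_mul_comm]
    have hX : Matrix.diagonal σB * (P * (Matrix.diagonal σA * UAᵀ)) * UB
        = Matrix.diagonal σB * (P * (Matrix.diagonal σA * Q)) := by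
      rw [hQ]
      simp only [Matrix.mul_assoc]
    rw [hX]
    simp only [Matrix.trace, Matrix.diag, Matrix.mul_apply, Matrix.diagonal_apply, ite_mul,
      zero_mul, Finset.sum_ite_eq, Finset.mem_univ, if_true]
    refine Finset.sum_congr rfl fun i _ => ?_
    rw [Finset.mul_sum]
    exact Finset.sum_congr rfl fun j _ => by ring
  set Mm : Matrix (Fin n) (Fin n) ℝ := fun i j => (P i j ^ 2 + Q j i ^ 2) / 2 with hMm
  have hMm0 : ∀ i j, 0 ≤ Mm i j := fun i j => by positivity
  have hrow : ∀ i, ∑ j, Mm i j = 1 := by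
    intro i
    have h1 : ∑ j, P i j ^ 2 = 1 := by
      have := congrArg (fun N => N i i) hPPt
      simpa [Matrix.mul_apply, Matrix.one_apply, sq] using this
    have h2 : ∑ j, Q j i ^ 2 = 1 := by
      have := congrArg (fun N => N i i) hQtQ
      simpa [Matrix.mul_apply, Matrix.one_apply, sq] using this
    simp only [hMm]
    rw [← Finset.sum_div, Finset.sum_add_distrib, h1, h2]
    norm_num
  have hcol : ∀ j, ∑ i, Mm i j = 1 := by
    intro j
    have h1 : ∑ i, P i j ^ 2 = 1 := by
      have := congrArg (fun N => N j j) hPtP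
      simpa [Matrix.mul_apply, Matrix.one_apply, sq] using this
    have h2 : ∑ i, Q j i ^ 2 = 1 := by
      have := congrArg (fun N => N j j) hQQt
      simpa [Matrix.mul_apply, Matrix.one_apply, sq] using this
    simp only [hMm]
    rw [← Finset.sum_div, Finset.sum_add_distrib, h1, h2]
    norm_num
  have htr_le : (B * Aᵀ).trace ≤ ∑ i, σB i * σA i := by
    rw [htr_eq]
    calc ∑ i, ∑ j, σB i * (P i j * Q j i) * σA j
        ≤ ∑ i, ∑ j, σB i * Mm i j * σA j := by
          refine Finset.sum_le_sum fun i _ => Finset.sum_le_sum fun j _ => ?_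
          have hpq : P i j * Q j i ≤ Mm i j := by
            simp only [hMm]
            nlinarith [sq_nonneg (P i j - Q j i)]
          have := mul_le_mul_of_nonneg_left hpq (hB0 i)
          exact mul_le_mul_of_nonneg_right this (hA0 j)
      _ ≤ ∑ i, σB i * σA i := hw_ds_bound Mm σB σA hBanti hAanti hB0 hA0 hMm0 hrow hcol
  have lhs_expand : ∑ i, ∑ j, (B i j - A i j) ^ 2
      = ∑ i, σB i ^ 2 + ∑ i, σA i ^ 2 - 2 * (B * Aᵀ).trace := by
    have : ∀ i j, (B i j - A i j) ^ 2 = B i j ^ 2 + A i j ^ 2 - 2 * (B i j * A i j) := by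
      intro i j; ring
    simp_rw [this, Finset.sum_sub_distrib, Finset.sum_add_distrib, ← Finset.mul_sum]
    rw [hnA, hnB, hcross]
  have rhs_expand : ∑ j, (σB j - σA j) ^ 2
      = ∑ i, σB i ^ 2 + ∑ i, σA i ^ 2 - 2 * ∑ i, σB i * σA i := by
    have : ∀ j, (σB j - σA j) ^ 2 = σB j ^ 2 + σA j ^ 2 - 2 * (σB j * σA j) := by
      intro j; ring
    simp_rw [this, Finset.sum_sub_distrib, Finset.sum_add_distrib, ← Finset.mul_sum]
  constructor
  · rw [lhs_expand, rhs_expand]; linarith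
  · intro heq
    rw [lhs_expand, rhs_expand, heq]
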